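/- Let φ : A → B(H') be a *-homomorphism, where A ≤ B(H) is a *-algebra, and let B ≤ B(H') be a C*-algebra containing all finite-rank operators on H' as well as φ(A). If φ(A) is a hereditary subalgebra of B, then φ maps operators of rank at most 1 to operators of rank at most 1. -/

import Mathlib

set_option maxHeartbeats 1600000


open ContinuousLinearMap

variable {H H' : Type*}
  [NormedAddCommGroup H] [InnerProductSpace ℂ H] [CompleteSpace H]
  [NormedAddCommGroup H'] [InnerProductSpace ℂ H'] [CompleteSpace H']

local notation "⟪" x ", " y "⟫" => @inner ℂ _ _ x y

private lemma isPositive_of_real_inner (q : H' →L[ℂ] H')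
    (hq : ∀ x, ∃ r : ℝ, 0 ≤ r ∧ ⟪q x, x⟫ = (r : ℂ)) : q.IsPositive := by
  rw [isPositive_iff_complex]
  intro x
  obtain ⟨r, hr0, hr⟩ := hq x
  rw [hr]
  simp only [RCLike.re_to_complex, Complex.ofReal_re]
  exact ⟨trivial, hr0⟩

/-- Let `φ : A → B(H')` be a `*`-homomorphism from a `*`-subalgebra `A ≤ B(H)`, and let
`B ≤ B(H')` be a C*-algebra (closed `*`-subalgebra) containing all finite-rank operators
on `H'` as well as `φ(A)`.  If `φ(A)` is a hereditary subalgebra of `B`, then `φ` maps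
operators of rank at most 1 to operators of rank at most 1. -/
theorem stmt18 (A : NonUnitalStarSubalgebra ℂ (H →L[ℂ] H))
    (φ : A →⋆ₙₐ[ℂ] (H' →L[ℂ] H'))
    (B : NonUnitalStarSubalgebra ℂ (H' →L[ℂ] H'))
    (hBclosed : IsClosed (B : Set (H' →L[ℂ] H')))
    (hBfin : ∀ t : H' →L[ℂ] H',
      FiniteDimensional ℂ (LinearMap.range (t : H' →ₗ[ℂ] H')) → t ∈ B)
    (hφB : ∀ a : A, φ a ∈ B)
    (hher : ∀ b : H' →L[ℂ] H', b ∈ B → b.IsPositive →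
      (∃ a : A, (φ a).IsPositive ∧ ((φ a) - b).IsPositive) → b ∈ Set.range φ) :
    ∀ a : A, LinearMap.rank ((a : H →L[ℂ] H) : H →ₗ[ℂ] H) ≤ 1 →
      LinearMap.rank ((φ a : H' →L[ℂ] H') : H' →ₗ[ℂ] H') ≤ 1 := by
  intro a ha
  by_cases h0 : (a : H →L[ℂ] H) = 0
  · have ha0 : a = 0 := Subtype.ext h0
    rw [ha0, map_zero]
    simp only [ContinuousLinearMap.coe_zero]
    exact (LinearMap.rank_zero (K := ℂ) (V := H') (V' := H')).le.trans zero_le_one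
  -- a ≠ 0 : get a vector x₀ with a x₀ ≠ 0
  obtain ⟨x₀, hx₀⟩ : ∃ x, (a : H →L[ℂ] H) x ≠ 0 := by
    by_contra h
    push_neg at h
    exact h0 (ContinuousLinearMap.ext fun x => by simpa using h x)
  obtain ⟨u, hu_def⟩ : ∃ u : H, u = (a : H →L[ℂ] H) x₀ := ⟨_, rfl⟩
  have hu : u ≠ 0 := by rw [hu_def]; exact hx₀
  have hnu : (‖u‖ : ℂ) ≠ 0 := by
    simpa using (norm_ne_zero_iff).mpr hu
  -- every value of a is a multiple of u
  have hcu : ∀ x, ∃ c : ℂ, (a : H →L[ℂ] H) x = c • u := by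
    obtain ⟨v₀, hv₀⟩ := rank_le_one_iff.mp ha
    have humem : u ∈ LinearMap.range ((a : H →L[ℂ] H) : H →ₗ[ℂ] H) := by
      rw [hu_def]; exact LinearMap.mem_range_self _ x₀
    obtain ⟨r₀, hr₀⟩ := hv₀ ⟨u, humem⟩
    have h2 : r₀ • (v₀ : H) = u := by
      have := congrArg Subtype.val hr₀; simpa using this
    have hr₀ne : r₀ ≠ 0 := by
      rintro rfl; apply hu; rw [← h2, zero_smul]
    intro x
    obtain ⟨r, hr⟩ := hv₀ ⟨(a : H →L[ℂ] H) x, LinearMap.mem_range_self _ x⟩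
    have h1 : r • (v₀ : H) = (a : H →L[ℂ] H) x := by
      have := congrArg Subtype.val hr; simpa using this
    refine ⟨r * r₀⁻¹, ?_⟩
    have hv0 : (v₀ : H) = r₀⁻¹ • u := by
      rw [← h2, smul_smul, inv_mul_cancel₀ hr₀ne, one_smul]
    rw [← h1, hv0, smul_smul]
  -- the vector v with a x = ⟪v, x⟫ • u
  obtain ⟨v, hv_def⟩ :
      ∃ v : H, v = (((‖u‖ : ℂ) ^ 2)⁻¹) • (ContinuousLinearMap.adjoint (a : H →L[ℂ] H)) u :=
    ⟨_, rfl⟩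
  have hav : ∀ x, (a : H →L[ℂ] H) x = ⟪v, x⟫ • u := by
    intro x
    obtain ⟨c, hc⟩ := hcu x
    have hvx : ⟪v, x⟫ = c := by
      rw [hv_def, inner_smul_left, adjoint_inner_left, hc, inner_smul_right,
        inner_self_eq_norm_sq_to_K]
      rw [map_inv₀, map_pow, Complex.conj_ofReal]
      field_simp
      exact mul_comm _ _
    rw [hc, hvx]
  have hadju : (ContinuousLinearMap.adjoint (a : H →L[ℂ] H)) u = ((‖u‖ : ℂ) ^ 2) • v := by
    rw [hv_def, smul_smul, mul_inv_cancel₀ (pow_ne_zero 2 hnu), one_smul]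
  have hv : v ≠ 0 := by
    intro hv0
    have h := hav x₀
    rw [hv0, inner_zero_left, zero_smul, ← hu_def] at h
    exact hu h
  have hnv : (‖v‖ : ℂ) ≠ 0 := by simpa using (norm_ne_zero_iff).mpr hv
  have hvv : ⟪v, v⟫ = (‖v‖ : ℂ) ^ 2 := inner_self_eq_norm_sq_to_K v
  obtain ⟨cv, hcv_def⟩ : ∃ cv : ℂ, cv = ((‖v‖ : ℂ) ^ 2)⁻¹ := ⟨_, rfl⟩
  have hcvv : cv * (‖v‖ : ℂ) ^ 2 = 1 := by
    rw [hcv_def]; exact inv_mul_cancel₀ (pow_ne_zero 2 hnv)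
  obtain ⟨κ, hκ_def⟩ : ∃ κ : ℂ, κ = cv * ((‖u‖ : ℂ) ^ 2)⁻¹ := ⟨_, rfl⟩
  have hκc : (starRingEnd ℂ) κ = κ := by
    rw [hκ_def, hcv_def]
    simp [map_mul, map_inv₀, map_pow, Complex.conj_ofReal]
  -- the rank-one projection e ∈ A
  obtain ⟨e, he_def⟩ : ∃ e : A, e = κ • (star a * a) := ⟨_, rfl⟩
  have he : ∀ x, (e : H →L[ℂ] H) x = (cv * ⟪v, x⟫) • v := by
    intro x
    have hcoe : (e : H →L[ℂ] H) = κ • ((star (a : H →L[ℂ] H)) * (a : H →L[ℂ] H)) := by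
      rw [he_def]; rfl
    rw [hcoe]
    have hst : ((star (a : H →L[ℂ] H)) * (a : H →L[ℂ] H)) x
        = (ContinuousLinearMap.adjoint (a : H →L[ℂ] H)) ((a : H →L[ℂ] H) x) := by
      rw [star_eq_adjoint]; rfl
    rw [ContinuousLinearMap.smul_apply, hst, hav x, map_smul, hadju,
      smul_smul, smul_smul, hκ_def]
    congr 1
    have : (‖u‖ : ℂ) ^ 2 ≠ 0 := pow_ne_zero 2 hnu
    field_simp
  have hev : (e : H →L[ℂ] H) v = v := by
    rw [he, hvv, hcvv, one_smul]
  have hee : e * e = e := by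
    apply Subtype.ext
    have hcoe : ((e * e : A) : H →L[ℂ] H) = (e : H →L[ℂ] H) * (e : H →L[ℂ] H) := rfl
    rw [hcoe]
    apply ContinuousLinearMap.ext
    intro x
    rw [ContinuousLinearMap.mul_apply, he x, map_smul, hev]
  have hae : a * e = a := by
    apply Subtype.ext
    have hcoe : ((a * e : A) : H →L[ℂ] H) = (a : H →L[ℂ] H) * (e : H →L[ℂ] H) := rfl
    rw [hcoe]
    apply ContinuousLinearMap.ext
    intro x
    rw [ContinuousLinearMap.mul_apply, he x, map_smul, hav v, hav x, hvv,
      smul_smul, mul_assoc, mul_comm (⟪v, x⟫), ← mul_assoc, hcvv, one_mul]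
  have hestar : star e = e := by
    have key : ∀ (x : A) (c : ℂ), (starRingEnd ℂ) c = c →
        star (c • (star x * x)) = c • (star x * x) := by
      intro x c hc
      rw [star_smul, star_mul, star_star, show star c = c from hc]
    rw [he_def]
    exact key a κ hκc
  -- now work with p = φ e
  obtain ⟨p, hp_def⟩ : ∃ p : H' →L[ℂ] H', p = φ e := ⟨_, rfl⟩
  have hpp : ∀ x, p (p x) = p x := by
    intro x
    have hmul : p * p = p := by
      rw [hp_def]
      exact (map_mul φ e e).symm.trans (congrArg φ hee)
    have h := ContinuousLinearMap.ext_iff.mp hmul x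
    rw [ContinuousLinearMap.mul_apply] at h
    exact h
  have hp_star : star p = p := by rw [hp_def, ← map_star, hestar]
  have hp_adj : ContinuousLinearMap.adjoint p = p := by rw [← star_eq_adjoint, hp_star]
  have hips : ∀ x, ⟪p x, x⟫ = ((‖p x‖ ^ 2 : ℝ) : ℂ) := by
    intro x
    have h1 : ⟪p x, x⟫ = ⟪p (p x), x⟫ := by rw [hpp]
    have h2 := adjoint_inner_left p x (p x)
    rw [hp_adj] at h2
    rw [h1, h2, inner_self_eq_norm_sq_to_K]
    norm_cast
  have hp_pos : p.IsPositive :=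
    isPositive_of_real_inner p fun x => ⟨‖p x‖ ^ 2, sq_nonneg _, hips x⟩
  -- the key claim: rank p ≤ 1
  have hp_rank : LinearMap.rank ((p : H' →L[ℂ] H') : H' →ₗ[ℂ] H') ≤ 1 := by
    by_cases hp0 : p = 0
    · rw [hp0]
      simp only [ContinuousLinearMap.coe_zero]
      exact (LinearMap.rank_zero (K := ℂ) (V := H') (V' := H')).le.trans zero_le_one
    obtain ⟨x₁, hx₁⟩ : ∃ x, p x ≠ 0 := by
      by_contra h
      push_neg at h
      exact hp0 (ContinuousLinearMap.ext fun x => by simpa using h x)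
    obtain ⟨w, hw_def⟩ : ∃ w : H', w = ((‖p x₁‖ : ℂ))⁻¹ • p x₁ := ⟨_, rfl⟩
    have hw1 : ‖w‖ = 1 := by
      have hn : ‖p x₁‖ ≠ 0 := norm_ne_zero_iff.mpr hx₁
      rw [hw_def, norm_smul, norm_inv, Complex.norm_real, norm_norm]
      exact inv_mul_cancel₀ hn
    have hw0 : w ≠ 0 := by
      intro h; rw [h, norm_zero] at hw1; exact zero_ne_one hw1
    have hpw : p w = w := by
      rw [hw_def, map_smul, hpp]
    have hww : ⟪w, w⟫ = 1 := by
      rw [inner_self_eq_norm_sq_to_K, hw1]; norm_num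
    obtain ⟨b, hb_def⟩ : ∃ b : H' →L[ℂ] H', b = (innerSL ℂ w).smulRight w := ⟨_, rfl⟩
    have hb : ∀ x, b x = ⟪w, x⟫ • w := by
      intro x; rw [hb_def]; rfl
    have hrangeb : LinearMap.range ((b : H' →L[ℂ] H') : H' →ₗ[ℂ] H')
        ≤ Submodule.span ℂ {w} := by
      rintro y ⟨x, rfl⟩
      have : (b : H' →ₗ[ℂ] H') x = ⟪w, x⟫ • w := hb x
      rw [this]
      exact Submodule.smul_mem _ _ (Submodule.mem_span_singleton_self w)
    have hbB : b ∈ B := by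
      refine hBfin b ?_
      exact Submodule.finiteDimensional_of_le hrangeb
    have hbip : ∀ x, ⟪b x, x⟫ = ((‖⟪w, x⟫‖ ^ 2 : ℝ) : ℂ) := by
      intro x
      rw [hb, inner_smul_left, RCLike.conj_mul]
      norm_cast
    have hb_pos : b.IsPositive :=
      isPositive_of_real_inner b fun x => ⟨‖⟪w, x⟫‖ ^ 2, sq_nonneg _, hbip x⟩
    have hwx : ∀ x, ⟪w, x⟫ = ⟪w, p x⟫ := by
      intro x
      have h2 := adjoint_inner_left p x w
      rw [hp_adj, hpw] at h2
      exact h2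
    have hpb_pos : (p - b).IsPositive := by
      refine isPositive_of_real_inner _ fun x => ⟨‖p x‖ ^ 2 - ‖⟪w, p x⟫‖ ^ 2, ?_, ?_⟩
      · have h1 : ‖⟪w, p x⟫‖ ≤ ‖w‖ * ‖p x‖ := norm_inner_le_norm w (p x)
        rw [hw1, one_mul] at h1
        have := pow_le_pow_left₀ (norm_nonneg _) h1 2
        linarith
      · rw [ContinuousLinearMap.sub_apply, inner_sub_left, hips x, hbip x, hwx x]
        push_cast
        ring
    -- hereditarity gives b ∈ range φ
    have hφe_pos : (φ e).IsPositive := by rw [← hp_def]; exact hp_pos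
    have hφeb_pos : (φ e - b).IsPositive := by rw [← hp_def]; exact hpb_pos
    obtain ⟨a₂, ha₂⟩ := hher b hbB hb_pos ⟨e, hφe_pos, hφeb_pos⟩
    obtain ⟨μ, hμ_def⟩ : ∃ μ : ℂ, μ = cv * ⟪v, (a₂ : H →L[ℂ] H) v⟫ := ⟨_, rfl⟩
    have heae : e * a₂ * e = μ • e := by
      apply Subtype.ext
      have hcoe : ((e * a₂ * e : A) : H →L[ℂ] H)
          = (e : H →L[ℂ] H) * (a₂ : H →L[ℂ] H) * (e : H →L[ℂ] H) := rfl
      have hcoe2 : ((μ • e : A) : H →L[ℂ] H) = μ • (e : H →L[ℂ] H) := rfl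
      rw [hcoe, hcoe2]
      apply ContinuousLinearMap.ext
      intro x
      rw [ContinuousLinearMap.mul_apply, ContinuousLinearMap.mul_apply, he x, map_smul,
        map_smul, he ((a₂ : H →L[ℂ] H) v), ContinuousLinearMap.smul_apply, he x,
        smul_smul, smul_smul, hμ_def]
      congr 1
      ring
    have hpbp : p * b * p = b := by
      apply ContinuousLinearMap.ext
      intro x
      rw [ContinuousLinearMap.mul_apply, ContinuousLinearMap.mul_apply, hb (p x), map_smul,
        hpw, hb x, ← hwx x]
    have hbμp : b = μ • p := by
      have h1 : φ (e * a₂ * e) = p * b * p := by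
        rw [hp_def, ← ha₂]
        exact (map_mul φ (e * a₂) e).trans (by rw [map_mul φ e a₂])
      have h2 : φ (μ • e) = μ • p := by rw [hp_def, map_smul]
      rw [← hpbp, ← h1, heae, h2]
    have hμ1 : μ = 1 := by
      have h1 : b w = w := by rw [hb, hww, one_smul]
      have h2 : (μ • p) w = μ • w := by
        rw [ContinuousLinearMap.smul_apply, hpw]
      have h3 : μ • w = w := by rw [← h2, ← hbμp, h1]
      by_contra hμ
      apply hw0
      have h4 : (μ - 1) • w = 0 := by rw [sub_smul, h3, one_smul, sub_self]
      rcases smul_eq_zero.mp h4 with h | h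
      · exact absurd (by linear_combination h) hμ
      · exact h
    have hpb : p = b := by rw [hbμp, hμ1, one_smul]
    have hrangep : LinearMap.range ((p : H' →L[ℂ] H') : H' →ₗ[ℂ] H')
        ≤ Submodule.span ℂ {w} := by
      rw [hpb]; exact hrangeb
    calc LinearMap.rank ((p : H' →L[ℂ] H') : H' →ₗ[ℂ] H')
        ≤ Module.rank ℂ (Submodule.span ℂ ({w} : Set H')) := Submodule.rank_mono hrangep
      _ ≤ 1 := by simpa using rank_span_le (R := ℂ) ({w} : Set H')
  -- conclude: φ a = φ a * p
  have h1 : φ a = φ a * p := by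
    rw [hp_def]
    exact (congrArg φ hae).symm.trans (map_mul φ a e)
  rw [h1]
  have h2 : ((φ a * p : H' →L[ℂ] H') : H' →ₗ[ℂ] H')
      = ((φ a : H' →L[ℂ] H') : H' →ₗ[ℂ] H').comp ((p : H' →L[ℂ] H') : H' →ₗ[ℂ] H') := rfl
  rw [h2]
  exact le_trans (LinearMap.rank_comp_le_right _ _) hp_rank
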